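/- Let z, w be nonzero complex numbers and k ≥ 1 an integer. If the principal argument of z/w satisfies |Arg(z/w)| < π/(2k), then |w − z|^k ≤ |w^k − z^k|. -/

import Mathlib

open Complex Polynomial Finset

/-- Key trig fact: if `|θ| < π/(2k)` then `cos (θ - 2πm/k) ≤ cos θ` for any integer `m`. -/
lemma cos_key {k : ℕ} (hk : 1 ≤ k) {θ : ℝ} (hθ : |θ| < Real.pi / (2 * k)) (m : ℤ) :
    Real.cos (θ - 2 * Real.pi * m / k) ≤ Real.cos θ := by
  have hkpos : (0:ℝ) < k := by exact_mod_cast hk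
  have hπ := Real.pi_pos
  have hθ1 : θ < Real.pi / (2 * k) := lt_of_abs_lt hθ
  have hθ2 : -(Real.pi / (2 * k)) < θ := neg_lt_of_abs_lt hθ
  -- reduce to a sign statement about sines
  have hiden : Real.cos θ - Real.cos (θ - 2 * Real.pi * m / k)
      = 2 * (Real.sin (Real.pi * m / k) * Real.sin (Real.pi * m / k - θ)) := by
    rw [Real.cos_sub_cos]
    have h1 : (θ + (θ - 2 * Real.pi * m / k)) / 2 = θ - Real.pi * m / k := by ring
    have h2 : (θ - (θ - 2 * Real.pi * m / k)) / 2 = Real.pi * m / k := by ring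
    rw [h1, h2, Real.sin_sub]
    rw [Real.sin_sub] ; ring
  have hsign : 0 ≤ Real.sin (Real.pi * m / k) * Real.sin (Real.pi * m / k - θ) := by
    obtain ⟨q, j, hj0', hj, hmj⟩ : ∃ (q j : ℤ), 0 ≤ j ∧ j < k ∧ m = q * k + j := by
      have h0 : (0:ℤ) < k := by exact_mod_cast hk
      exact ⟨m / (k:ℤ), m % (k:ℤ), Int.emod_nonneg m h0.ne', Int.emod_lt_of_pos m h0, by
        linear_combination (Int.mul_ediv_add_emod m (k:ℤ)).symm⟩
    have hrw : Real.pi * m / k = Real.pi * j / k + q * Real.pi := by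
      have : (m:ℝ) = q * k + j := by exact_mod_cast hmj
      field_simp [this]
      linear_combination this
    have hs1 : Real.sin (Real.pi * m / k) = (-1)^q * Real.sin (Real.pi * j / k) := by
      rw [hrw, Real.sin_add_int_mul_pi]
    have hs2 : Real.sin (Real.pi * m / k - θ) = (-1)^q * Real.sin (Real.pi * j / k - θ) := by
      have : Real.pi * m / k - θ = (Real.pi * j / k - θ) + q * Real.pi := by rw [hrw]; ring
      rw [this, Real.sin_add_int_mul_pi]
    have hq : ((-1:ℝ)^q) * ((-1:ℝ)^q) = 1 := by
      rw [← zpow_add₀ (by norm_num : (-1:ℝ) ≠ 0)]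
      exact Even.neg_one_zpow ⟨q, rfl⟩
    have hsq : Real.sin (Real.pi * m / k) * Real.sin (Real.pi * m / k - θ)
        = Real.sin (Real.pi * j / k) * Real.sin (Real.pi * j / k - θ) := by
      rw [hs1, hs2]
      linear_combination (Real.sin (Real.pi * j / k) * Real.sin (Real.pi * j / k - θ)) * hq
    rw [hsq]
    rcases eq_or_lt_of_le hj0' with hj0 | hjpos
    · simp [← hj0]
    · have hjR : (1:ℝ) ≤ j := by exact_mod_cast hjpos
      have hjk : (j:ℝ) ≤ k - 1 := by
        have : (j:ℝ) + 1 ≤ k := by exact_mod_cast hj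
        linarith
      have hlow : Real.pi / (2 * k) < Real.pi * j / k - θ := by
        have h5 : Real.pi / k ≤ Real.pi * j / k := by
          apply div_le_div_of_nonneg_right _ hkpos.le
          nlinarith
        have h3 : Real.pi / (2 * k) + Real.pi / (2 * k) = Real.pi / k := by
          field_simp; ring
        linarith
      have hjub : Real.pi * j / k ≤ Real.pi * (k - 1) / k := by
        apply div_le_div_of_nonneg_right _ hkpos.le
        nlinarith
      have hhigh : Real.pi * j / k - θ < Real.pi := by
        have h4 : Real.pi * (k - 1) / k + Real.pi / (2*k) < Real.pi := by
          rw [div_add_div _ _ (ne_of_gt hkpos) (by positivity : (2*(k:ℝ)) ≠ 0)]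
          rw [div_lt_iff₀ (by positivity)]
          nlinarith
        linarith
      have hpos1 : 0 < Real.sin (Real.pi * j / k) := by
        apply Real.sin_pos_of_pos_of_lt_pi
        · positivity
        · calc Real.pi * j / k ≤ Real.pi * (k-1) / k := hjub
            _ < Real.pi := by
                rw [div_lt_iff₀ hkpos]; nlinarith
      have hpos2 : 0 < Real.sin (Real.pi * j / k - θ) := by
        apply Real.sin_pos_of_pos_of_lt_pi
        · have : 0 < Real.pi / (2*k) := by positivity
          linarith
        · exact hhigh
      positivity
  linarith [hiden, hsign]

/-- Among all `k`-th roots of unity, `1` is closest to `u` when `|arg u| < π/(2k)`. -/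
lemma dist_key {k : ℕ} (hk : 1 ≤ k) {u : ℂ}
    (hθ : |u.arg| < Real.pi / (2 * k)) {ζ : ℂ} (hζ : ζ ^ k = 1) :
    ‖u - 1‖ ≤ ‖u - ζ‖ := by
  have hk0 : k ≠ 0 := by omega
  have habs : ‖ζ‖ = 1 := Complex.norm_eq_one_of_pow_eq_one hζ hk0
  set ψ := ζ.arg with hψdef
  have hζ'' : ζ = Complex.exp ((ψ : ℂ) * Complex.I) := by
    have h2 := Complex.norm_mul_exp_arg_mul_I ζ
    rw [habs] at h2; simpa using h2.symm
  -- ψ = 2πm/k for some integer m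
  obtain ⟨m, hm⟩ : ∃ m : ℤ, ψ = 2 * Real.pi * m / k := by
    have hζ' : Complex.exp ((k : ℂ) * ((ψ : ℂ) * Complex.I)) = 1 := by
      rw [Complex.exp_nat_mul, ← hζ'', hζ]
    obtain ⟨n, hn⟩ := Complex.exp_eq_one_iff.mp hζ'
    have hI : ((k:ℂ) * (ψ:ℂ)) * Complex.I = ((n:ℂ) * (2 * (Real.pi:ℂ))) * Complex.I := by
      linear_combination hn
    have hC := mul_right_cancel₀ Complex.I_ne_zero hI
    have hR : (k : ℝ) * ψ = n * (2 * Real.pi) := by exact_mod_cast hC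
    have hkR : (0:ℝ) < k := by exact_mod_cast hk
    refine ⟨n, ?_⟩
    field_simp
    linear_combination hR
  -- now compute norms
  set r := ‖u‖ with hr
  set θ := u.arg with hθdef
  have hu' : u = (r : ℂ) * Complex.exp ((θ : ℂ) * Complex.I) :=
    (Complex.norm_mul_exp_arg_mul_I u).symm
  have hre1 : (u * (starRingEnd ℂ) 1).re = r * Real.cos θ := by
    rw [map_one, mul_one, hu']
    rw [Complex.re_ofReal_mul, Complex.exp_ofReal_mul_I_re]
  have hre2 : (u * (starRingEnd ℂ) ζ).re = r * Real.cos (θ - ψ) := by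
    rw [hu', hζ'', ← Complex.exp_conj]
    have hconj : (starRingEnd ℂ) ((ψ : ℂ) * Complex.I) = ((-ψ : ℝ) : ℂ) * Complex.I := by
      simp [Complex.conj_ofReal]
    rw [hconj, mul_assoc, ← Complex.exp_add,
      show ((θ:ℂ) * Complex.I + ((-ψ : ℝ):ℂ) * Complex.I) = ((θ - ψ : ℝ) : ℂ) * Complex.I
        by push_cast; ring]
    rw [Complex.re_ofReal_mul, Complex.exp_ofReal_mul_I_re]
  have hnormζ : Complex.normSq ζ = 1 := by
    have := Complex.sq_norm ζ
    rw [habs] at this; simpa using this.symm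
  have hns1 : Complex.normSq (u - 1) = Complex.normSq u + 1 - 2 * (r * Real.cos θ) := by
    rw [Complex.normSq_sub, hre1]; simp
  have hns2 : Complex.normSq (u - ζ) = Complex.normSq u + 1 - 2 * (r * Real.cos (θ - ψ)) := by
    rw [Complex.normSq_sub, hre2, hnormζ]
  have hcos : Real.cos (θ - ψ) ≤ Real.cos θ := by
    rw [hm]; exact cos_key hk hθ m
  have hrnn : 0 ≤ r := norm_nonneg u
  have hns : Complex.normSq (u - 1) ≤ Complex.normSq (u - ζ) := by
    rw [hns1, hns2]
    nlinarith
  rw [Complex.norm_def, Complex.norm_def]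
  exact Real.sqrt_le_sqrt hns

theorem stmt6 (z w : ℂ) (hz : z ≠ 0) (hw : w ≠ 0) (k : ℕ) (hk : 1 ≤ k)
    (harg : |Complex.arg (z / w)| < Real.pi / (2 * k)) :
    ‖w - z‖ ^ k ≤ ‖w ^ k - z ^ k‖ := by
  have hkpos : 0 < k := hk
  set u := z / w with hu
  have prim := Complex.isPrimitiveRoot_exp k hkpos.ne'
  have hcard : (nthRootsFinset k (1 : ℂ)).card = k := prim.card_nthRootsFinset
  have hfact : u ^ k - 1 = ∏ ζ ∈ nthRootsFinset k (1 : ℂ), (u - ζ) := by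
    have := congrArg (Polynomial.eval u) (Polynomial.X_pow_sub_one_eq_prod hkpos prim)
    simpa [Polynomial.eval_prod] using this
  have key : ‖u - 1‖ ^ k ≤ ‖u ^ k - 1‖ := by
    rw [hfact, norm_prod]
    calc ‖u - 1‖ ^ k
        = ∏ _ζ ∈ nthRootsFinset k (1 : ℂ), ‖u - 1‖ := by
          rw [Finset.prod_const, hcard]
      _ ≤ ∏ ζ ∈ nthRootsFinset k (1 : ℂ), ‖u - ζ‖ := by
          apply Finset.prod_le_prod
          · intro ζ _; exact norm_nonneg _
          · intro ζ hζmem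
            exact dist_key hk harg ((Polynomial.mem_nthRootsFinset hkpos (1 : ℂ)).mp hζmem)
  -- transfer back
  have hzw : z = u * w := by rw [hu, div_mul_cancel₀ z hw]
  have h1 : w - z = w * (1 - u) := by rw [hzw]; ring
  have h2 : w ^ k - z ^ k = w ^ k * (1 - u ^ k) := by rw [hzw]; ring
  rw [h1, h2, norm_mul, norm_mul, mul_pow, norm_pow]
  have h3 : ‖1 - u‖ = ‖u - 1‖ := by
    rw [← norm_neg]; ring_nf
  have h4 : ‖1 - u ^ k‖ = ‖u ^ k - 1‖ := by
    rw [← norm_neg]; ring_nf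
  rw [h3, h4]
  exact mul_le_mul_of_nonneg_left key (by positivity)
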